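/- A linear operator Φ on π₃ is a local automorphism of π₃ if and only if there exist complex numbers b₁₁, b₂₁, b₃₁, b₃₂, b₃₄, b₅₁, b₅₄ with b₁₁ ≠ 0 and a sign ε ∈ {1,−1} such that the matrix of Φ is [[b₁₁,0,0,0,0],[b₂₁,b₁₁²,0,0,0],[b₃₁,b₃₂,ε·b₁₁³,b₃₄,0],[0,0,0,b₁₁,0],[b₅₁,0,0,b₅₄,b₁₁²]]. -/

import Mathlib

noncomputable section

/-- The multiplication of the 5-dimensional naturally graded nilpotent associative
algebra `π₃`, given on the basis `e₁, …, e₅` (indices `0, …, 4`) by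
`e₁e₁ = e₂`, `e₁e₂ = e₂e₁ = e₃`, `e₁e₄ = e₅`, `e₄e₄ = e₅`. -/
def pi3Mul (x y : Fin 5 → ℂ) : Fin 5 → ℂ :=
  ![0, x 0 * y 0, x 0 * y 1 + x 1 * y 0, 0, x 0 * y 3 + x 3 * y 3]

/-- An automorphism of `π₃`: a bijective linear operator respecting the multiplication. -/
def IsPi3Aut (Φ : (Fin 5 → ℂ) →ₗ[ℂ] (Fin 5 → ℂ)) : Prop :=
  Function.Bijective Φ ∧ ∀ x y, Φ (pi3Mul x y) = pi3Mul (Φ x) (Φ y)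

/-- A local automorphism of `π₃`: a linear operator that agrees at every point with
some automorphism (depending on the point). -/
def IsPi3LocAut (Φ : (Fin 5 → ℂ) →ₗ[ℂ] (Fin 5 → ℂ)) : Prop :=
  ∀ x : Fin 5 → ℂ, ∃ ψ : (Fin 5 → ℂ) →ₗ[ℂ] (Fin 5 → ℂ), IsPi3Aut ψ ∧ Φ x = ψ x

def autMap (a u1 u2 u4 v2 v4 : ℂ) : (Fin 5 → ℂ) →ₗ[ℂ] (Fin 5 → ℂ) :=
  Matrix.toLin' !![a,0,0,0,0; u1,a^2,0,0,0; u2,2*a*u1,a^3,v2,0; 0,0,0,a,0; u4,0,0,v4,a^2]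

lemma toLin'_apply_five (M : Matrix (Fin 5) (Fin 5) ℂ) (x : Fin 5 → ℂ) (i : Fin 5) :
    Matrix.toLin' M x i =
      M i 0 * x 0 + M i 1 * x 1 + M i 2 * x 2 + M i 3 * x 3 + M i 4 * x 4 := by
  simp [Matrix.toLin'_apply, Matrix.mulVec, dotProduct, Fin.sum_univ_five]

lemma autMap_apply (a u1 u2 u4 v2 v4 : ℂ) (x : Fin 5 → ℂ) :
    autMap a u1 u2 u4 v2 v4 x =
      ![a * x 0,
        u1 * x 0 + a^2 * x 1,
        u2 * x 0 + 2*a*u1 * x 1 + a^3 * x 2 + v2 * x 3,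
        a * x 3,
        u4 * x 0 + v4 * x 3 + a^2 * x 4] := by
  funext i
  fin_cases i <;>
    (simp [autMap, toLin'_apply_five, Matrix.vecHead, Matrix.vecTail]; try ring)

lemma autMap_isAut (a u1 u2 u4 v2 v4 : ℂ) (ha : a ≠ 0) :
    IsPi3Aut (autMap a u1 u2 u4 v2 v4) := by
  have hinj : Function.Injective (autMap a u1 u2 u4 v2 v4) := by
    rw [injective_iff_map_eq_zero]
    intro x hx
    have h0 : x 0 = 0 := by
      have := congrFun hx 0; simp [autMap_apply] at this; tauto
    have h3 : x 3 = 0 := by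
      have := congrFun hx 3; simp [autMap_apply] at this; tauto
    have h1 : x 1 = 0 := by
      have := congrFun hx 1; simp [autMap_apply, h0] at this; tauto
    have h2 : x 2 = 0 := by
      have := congrFun hx 2; simp [autMap_apply, h0, h1, h3] at this; tauto
    have h4 : x 4 = 0 := by
      have := congrFun hx 4; simp [autMap_apply, h0, h3] at this; tauto
    funext i; fin_cases i <;> simp [h0, h1, h2, h3, h4]
  refine ⟨⟨hinj, (LinearMap.injective_iff_surjective).mp hinj⟩, ?_⟩
  intro x y
  funext i
  fin_cases i <;> · (simp [autMap_apply, pi3Mul]; try ring)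

lemma aut_struct {ψ : (Fin 5 → ℂ) →ₗ[ℂ] (Fin 5 → ℂ)} (h : IsPi3Aut ψ) :
    ∃ a u1 u2 u4 v2 v4 : ℂ, a ≠ 0 ∧
      ψ ![1,0,0,0,0] = ![a,u1,u2,0,u4] ∧
      ψ ![0,1,0,0,0] = ![0,a^2,2*a*u1,0,0] ∧
      ψ ![0,0,1,0,0] = ![0,0,a^3,0,0] ∧
      ψ ![0,0,0,1,0] = ![0,0,v2,a,v4] ∧
      ψ ![0,0,0,0,1] = ![0,0,0,0,a^2] := by
  obtain ⟨hbij, hmul⟩ := h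
  obtain ⟨u, hu⟩ : ∃ u, ψ ![1,0,0,0,0] = u := ⟨_, rfl⟩
  obtain ⟨v, hv⟩ : ∃ v, ψ ![0,0,0,1,0] = v := ⟨_, rfl⟩
  have m11 : pi3Mul ![1,0,0,0,0] ![1,0,0,0,0] = (![0,1,0,0,0] : Fin 5 → ℂ) := by
    funext i; fin_cases i <;> simp [pi3Mul]
  have m12 : pi3Mul ![1,0,0,0,0] ![0,1,0,0,0] = (![0,0,1,0,0] : Fin 5 → ℂ) := by
    funext i; fin_cases i <;> simp [pi3Mul]
  have m14 : pi3Mul ![1,0,0,0,0] ![0,0,0,1,0] = (![0,0,0,0,1] : Fin 5 → ℂ) := by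
    funext i; fin_cases i <;> simp [pi3Mul]
  have m44 : pi3Mul ![0,0,0,1,0] ![0,0,0,1,0] = (![0,0,0,0,1] : Fin 5 → ℂ) := by
    funext i; fin_cases i <;> simp [pi3Mul]
  have m24 : pi3Mul ![0,1,0,0,0] ![0,0,0,1,0] = (0 : Fin 5 → ℂ) := by
    funext i; fin_cases i <;> simp [pi3Mul]
  have m41 : pi3Mul ![0,0,0,1,0] ![1,0,0,0,0] = (0 : Fin 5 → ℂ) := by
    funext i; fin_cases i <;> simp [pi3Mul]
  have he2 : ψ ![0,1,0,0,0] = pi3Mul u u := by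
    rw [← m11, hmul, hu]
  have he3 : ψ ![0,0,1,0,0] = pi3Mul u (pi3Mul u u) := by
    rw [← m12, hmul, hu, he2]
  have he5 : ψ ![0,0,0,0,1] = pi3Mul u v := by
    rw [← m14, hmul, hu, hv]
  have he5' : ψ ![0,0,0,0,1] = pi3Mul v v := by
    rw [← m44, hmul, hv]
  have h24 : pi3Mul (pi3Mul u u) v = 0 := by
    rw [← he2, ← hv, ← hmul, m24, map_zero]
  have h41 : pi3Mul v u = 0 := by
    rw [← hu, ← hv, ← hmul, m41, map_zero]
  have ha : u 0 ≠ 0 := by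
    intro h0
    have hz : ψ ![0,0,1,0,0] = ψ 0 := by
      rw [map_zero, he3]
      funext i; fin_cases i <;> simp [pi3Mul, h0]
    have := hbij.injective hz
    simpa using congrFun this 2
  have hv0 : v 0 = 0 := by
    have := congrFun h24 2
    simp [pi3Mul] at this
    tauto
  have hv1 : v 1 = 0 := by
    have := congrFun h41 2
    simp [pi3Mul, hv0] at this
    tauto
  have h434 : v 3 * u 3 = 0 := by
    have := congrFun h41 4
    simp [pi3Mul, hv0] at this
    exact mul_eq_zero.mpr this
  have hv3 : v 3 ≠ 0 := by
    intro h0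
    have hz : ψ ![0,0,0,0,1] = ψ 0 := by
      rw [map_zero, he5']
      funext i; fin_cases i <;> simp [pi3Mul, hv0, h0]
    have := hbij.injective hz
    simpa using congrFun this 4
  have hu3 : u 3 = 0 := by
    rcases mul_eq_zero.mp h434 with h | h
    · exact absurd h hv3
    · exact h
  have hv3u0 : v 3 = u 0 := by
    have := congrFun (he5.symm.trans he5') 4
    simp [pi3Mul, hv0, hu3] at this
    tauto
  refine ⟨u 0, u 1, u 2, u 4, v 2, v 4, ha, ?_, ?_, ?_, ?_, ?_⟩
  · rw [hu]; funext i; fin_cases i <;> simp [hu3]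
  · rw [he2]; funext i; fin_cases i <;> (simp [pi3Mul, hu3]; try ring)
  · rw [he3]; funext i; fin_cases i <;> (simp [pi3Mul, hu3]; try ring)
  · rw [hv]; funext i; fin_cases i <;> simp [hv0, hv1, hv3u0]
  · rw [he5']; funext i; fin_cases i <;> (simp [pi3Mul, hv0, hv3u0]; try ring)

set_option maxHeartbeats 1600000 in
theorem pi3_locAut_iff (Φ : (Fin 5 → ℂ) →ₗ[ℂ] (Fin 5 → ℂ)) :
    IsPi3LocAut Φ ↔
      ∃ b11 b21 b31 b32 b34 b51 b54 ε : ℂ, b11 ≠ 0 ∧ (ε = 1 ∨ ε = -1) ∧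
        LinearMap.toMatrix' Φ =
          !![b11, 0, 0, 0, 0;
             b21, b11 ^ 2, 0, 0, 0;
             b31, b32, ε * b11 ^ 3, b34, 0;
             0, 0, 0, b11, 0;
             b51, 0, 0, b54, b11 ^ 2] := by
  constructor
  · -- forward direction
    intro h
    obtain ⟨ψ1, hψ1, hx1⟩ := h ![1,0,0,0,0]
    obtain ⟨a, p1, p2, p4, _, _, ha, A1, -, -, -, -⟩ := aut_struct hψ1
    rw [A1] at hx1
    obtain ⟨ψ2, hψ2, hx2⟩ := h ![0,1,0,0,0]
    obtain ⟨b, b1, _, _, _, _, hb, -, B2, -, -, -⟩ := aut_struct hψ2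
    rw [B2] at hx2
    obtain ⟨ψ3, hψ3, hx3⟩ := h ![0,0,1,0,0]
    obtain ⟨c, _, _, _, _, _, hc, -, -, C3, -, -⟩ := aut_struct hψ3
    rw [C3] at hx3
    obtain ⟨ψ4, hψ4, hx4⟩ := h ![0,0,0,1,0]
    obtain ⟨d, _, _, _, d2, d4, hd, -, -, -, D4, -⟩ := aut_struct hψ4
    rw [D4] at hx4
    obtain ⟨ψ5, hψ5, hx5⟩ := h ![0,0,0,0,1]
    obtain ⟨e, _, _, _, _, _, he, -, -, -, -, E5⟩ := aut_struct hψ5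
    rw [E5] at hx5
    -- e1 + e4
    have s14 : (![1,0,0,1,0] : Fin 5 → ℂ) = ![1,0,0,0,0] + ![0,0,0,1,0] := by
      funext i; fin_cases i <;> simp
    obtain ⟨ψ, hψ, hx⟩ := h ![1,0,0,1,0]
    obtain ⟨f, _, _, _, _, _, hf, F1, -, -, F4, -⟩ := aut_struct hψ
    rw [s14, map_add, map_add, F1, F4, hx1, hx4] at hx
    have had : d = a := by
      have h0 := congrFun hx 0
      have h3 := congrFun hx 3
      simp at h0 h3
      rw [h3, h0]
    -- e2 + e4
    have s24 : (![0,1,0,1,0] : Fin 5 → ℂ) = ![0,1,0,0,0] + ![0,0,0,1,0] := by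
      funext i; fin_cases i <;> simp
    obtain ⟨ψ', hψ', hx'⟩ := h ![0,1,0,1,0]
    obtain ⟨g, _, _, _, _, _, hg, -, G2, -, G4, -⟩ := aut_struct hψ'
    rw [s24, map_add, map_add, G2, G4, hx2, hx4] at hx'
    have hba : b^2 = a^2 := by
      have h1 := congrFun hx' 1
      have h3 := congrFun hx' 3
      simp at h1 h3
      rw [h1, ← h3, had]
    -- e2 + e5
    have s25 : (![0,1,0,0,1] : Fin 5 → ℂ) = ![0,1,0,0,0] + ![0,0,0,0,1] := by
      funext i; fin_cases i <;> simp
    obtain ⟨ψ'', hψ'', hx''⟩ := h ![0,1,0,0,1]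
    obtain ⟨k, _, _, _, _, _, hk, -, K2, -, -, K5⟩ := aut_struct hψ''
    rw [s25, map_add, map_add, K2, K5, hx2, hx5] at hx''
    have heb : e^2 = b^2 := by
      have h1 := congrFun hx'' 1
      have h4 := congrFun hx'' 4
      simp at h1 h4
      rw [h1, h4]
    -- e3 + e5
    have s35 : (![0,0,1,0,1] : Fin 5 → ℂ) = ![0,0,1,0,0] + ![0,0,0,0,1] := by
      funext i; fin_cases i <;> simp
    obtain ⟨ψ''', hψ''', hx'''⟩ := h ![0,0,1,0,1]
    obtain ⟨w, _, _, _, _, _, hw, -, -, W3, -, W5⟩ := aut_struct hψ'''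
    rw [s35, map_add, map_add, W3, W5, hx3, hx5] at hx'''
    have hcw : c^3 = w^3 := by
      have h2 := congrFun hx''' 2
      simp at h2
      exact h2
    have hew : e^2 = w^2 := by
      have h4 := congrFun hx''' 4
      simp at h4
      exact h4
    have hw2 : w^2 = a^2 := by rw [← hew, heb, hba]
    have hcwa : c^3 = w * a^2 := by
      rw [hcw, ← hw2]; ring
    refine ⟨a, p1, p2, 2*b*b1, d2, p4, d4, w/a, ha, ?_, ?_⟩
    · have hfac : (w - a) * (w + a) = 0 := by linear_combination hw2
      rcases mul_eq_zero.mp hfac with hh | hh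
      · left; field_simp; linear_combination hh
      · right; field_simp; linear_combination hh
    · -- matrix equality
      have hdecomp : ∀ x : Fin 5 → ℂ,
          x = x 0 • ![1,0,0,0,0] + x 1 • ![0,1,0,0,0] + x 2 • ![0,0,1,0,0]
            + x 3 • ![0,0,0,1,0] + x 4 • ![0,0,0,0,1] := by
        intro x; funext i; fin_cases i <;> simp
      have hΦ : Φ = Matrix.toLin'
          !![a, 0, 0, 0, 0;
             p1, a ^ 2, 0, 0, 0;
             p2, 2*b*b1, c ^ 3, d2, 0;
             0, 0, 0, a, 0;
             p4, 0, 0, d4, a ^ 2] := by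
        apply LinearMap.ext
        intro x
        conv_lhs => rw [hdecomp x]
        simp only [map_add, map_smul, hx1, hx2, hx3, hx4, hx5]
        funext i
        fin_cases i <;>
          (simp [toLin'_apply_five, Matrix.vecHead, Matrix.vecTail, had, hba, heb]; try ring)
      have hentry : (w/a) * a ^ 3 = c ^ 3 := by
        field_simp
        linear_combination (-1 : ℂ) * hcwa
      rw [hΦ, LinearMap.toMatrix'_toLin', ← hentry]
  · -- backward direction
    rintro ⟨b11, b21, b31, b32, b34, b51, b54, ε, hb, hε, hM⟩
    have hε0 : ε ≠ 0 := by rcases hε with h | h <;> (rw [h]; norm_num)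
    have hΦ : Φ = Matrix.toLin'
        !![b11, 0, 0, 0, 0;
           b21, b11 ^ 2, 0, 0, 0;
           b31, b32, ε * b11 ^ 3, b34, 0;
           0, 0, 0, b11, 0;
           b51, 0, 0, b54, b11 ^ 2] := by
      apply LinearMap.toMatrix'.injective
      rw [hM, LinearMap.toMatrix'_toLin']
    have hΦx : ∀ x : Fin 5 → ℂ, Φ x =
        ![b11 * x 0,
          b21 * x 0 + b11^2 * x 1,
          b31 * x 0 + b32 * x 1 + ε * b11^3 * x 2 + b34 * x 3,
          b11 * x 3,
          b51 * x 0 + b54 * x 3 + b11^2 * x 4] := by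
      intro x
      rw [hΦ]
      funext i
      fin_cases i <;>
        (simp [toLin'_apply_five, Matrix.vecHead, Matrix.vecTail]; try ring)
    intro x
    by_cases h0 : x 0 = 0
    · by_cases h3 : x 3 = 0
      · refine ⟨autMap (ε*b11) (b32/(2*ε*b11)) 0 0 0 0,
          autMap_isAut _ _ _ _ _ _ (mul_ne_zero hε0 hb), ?_⟩
        rw [hΦx, autMap_apply]
        funext i
        fin_cases i
        · show b11 * x 0 = ε*b11 * x 0
          rw [h0]; ring
        · show b21 * x 0 + b11^2 * x 1 = b32/(2*ε*b11) * x 0 + (ε*b11)^2 * x 1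
          rw [h0]; rcases hε with h | h <;> rw [h] <;> ring
        · show b31 * x 0 + b32 * x 1 + ε * b11^3 * x 2 + b34 * x 3
            = 0 * x 0 + 2*(ε*b11)*(b32/(2*ε*b11)) * x 1 + (ε*b11)^3 * x 2 + 0 * x 3
          rw [h0, h3]
          rcases hε with h | h <;> (rw [h]; field_simp; try ring)
        · show b11 * x 3 = ε*b11 * x 3
          rw [h3]; ring
        · show b51 * x 0 + b54 * x 3 + b11^2 * x 4 = 0 * x 0 + 0 * x 3 + (ε*b11)^2 * x 4
          rw [h0, h3]; rcases hε with h | h <;> rw [h] <;> ring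
      · refine ⟨autMap b11 b21 b31 b51
          (b34 + ((b32 - 2*b11*b21) * x 1 + (ε-1) * b11^3 * x 2)/x 3) b54,
          autMap_isAut _ _ _ _ _ _ hb, ?_⟩
        rw [hΦx, autMap_apply]
        funext i
        fin_cases i
        · rfl
        · rfl
        · show b31 * x 0 + b32 * x 1 + ε * b11^3 * x 2 + b34 * x 3
            = b31 * x 0 + 2*b11*b21 * x 1 + b11^3 * x 2
              + (b34 + ((b32 - 2*b11*b21) * x 1 + (ε-1) * b11^3 * x 2)/x 3) * x 3
          field_simp
          ring
        · rfl
        · rfl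
    · refine ⟨autMap b11 b21
        (b31 + ((b32 - 2*b11*b21) * x 1 + (ε-1) * b11^3 * x 2)/x 0) b51 b34 b54,
        autMap_isAut _ _ _ _ _ _ hb, ?_⟩
      rw [hΦx, autMap_apply]
      funext i
      fin_cases i
      · rfl
      · rfl
      · show b31 * x 0 + b32 * x 1 + ε * b11^3 * x 2 + b34 * x 3
          = (b31 + ((b32 - 2*b11*b21) * x 1 + (ε-1) * b11^3 * x 2)/x 0) * x 0
            + 2*b11*b21 * x 1 + b11^3 * x 2 + b34 * x 3
        field_simp
        ring
      · rfl
      · rfl
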